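/- Let m > 0 and 0 ≤ δ ≤ 1/5. Let a, g : [1,∞) → ℝ be continuous with |a(λ)| ≤ δ and g(λ) ≥ (1 − δ)/(2 m² λ²) for all λ ≥ 1, and let z : [1,∞) → ℝ be differentiable with z(1) = 0 and z'(λ) = −λ⁻² a(λ) z(λ) + g(λ) for all λ ≥ 1. Then z(λ) ≥ (λ − 1)/(4 m² λ) for all λ ≥ 1; in particular z(λ) > 0 for all λ > 1. If moreover g(λ) ≤ C λ⁻² for all λ ≥ 1 and some constant C, then z(λ) converges to a finite limit as λ → ∞. -/

import Mathlib

open Filter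

private lemma monoAux {F : ℝ → ℝ} (hc : ContinuousOn F (Set.Ici 1))
    (hd : ∀ l ∈ Set.Ioi (1:ℝ), ∃ d, 0 ≤ d ∧ HasDerivAt F d l) :
    MonotoneOn F (Set.Ici 1) := by
  apply monotoneOn_of_deriv_nonneg (convex_Ici 1) hc
  · intro x hx
    rw [interior_Ici] at hx
    obtain ⟨d, _, hdd⟩ := hd x hx
    exact hdd.differentiableAt.differentiableWithinAt
  · intro x hx
    rw [interior_Ici] at hx
    obtain ⟨d, hd0, hdd⟩ := hd x hx
    rw [hdd.deriv]; exact hd0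

private lemma tendstoAux {F : ℝ → ℝ} {B : ℝ} (hmono : MonotoneOn F (Set.Ici 1))
    (hbdd : ∀ l ∈ Set.Ici (1:ℝ), F l ≤ B) :
    ∃ L, Tendsto F atTop (nhds L) := by
  set G : ℝ → ℝ := fun x => F (max x 1) with hG
  have hGmono : Monotone G := fun x y hxy =>
    hmono (le_max_right x 1) (le_max_right y 1) (max_le_max hxy le_rfl)
  have hGb : BddAbove (Set.range G) := by
    refine ⟨B, ?_⟩
    rintro _ ⟨x, rfl⟩
    exact hbdd _ (le_max_right x 1)
  refine ⟨⨆ x, G x, ?_⟩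
  refine (tendsto_atTop_ciSup hGmono hGb).congr' ?_
  filter_upwards [eventually_ge_atTop (1:ℝ)] with x hx
  simp [hG, max_eq_left hx]

/-- ODE content of the lower bound (4.32): `z(λ) = λ tr χ` along an incoming
null hypersurface from a MOTS satisfies `z ≥ (λ-1)/(4m²λ)`, is positive for
`λ > 1`, and converges when the forcing is `O(λ⁻²)`. -/
theorem penrose_trchi_lower_bound (m δ : ℝ) (hm : 0 < m) (hδ0 : 0 ≤ δ) (hδ : δ ≤ 1/5)
    (a g : ℝ → ℝ)
    (ha_cont : ContinuousOn a (Set.Ici 1)) (hg_cont : ContinuousOn g (Set.Ici 1))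
    (ha : ∀ l ≥ (1:ℝ), |a l| ≤ δ)
    (hg : ∀ l ≥ (1:ℝ), g l ≥ (1 - δ) / (2 * m ^ 2 * l ^ 2))
    (z : ℝ → ℝ) (hz1 : z 1 = 0)
    (hz : ∀ l ≥ (1:ℝ), HasDerivAt z (-(l ^ 2)⁻¹ * a l * z l + g l) l) :
    (∀ l ≥ (1:ℝ), z l ≥ (l - 1) / (4 * m ^ 2 * l)) ∧
    (∀ l > (1:ℝ), 0 < z l) ∧
    (∀ C : ℝ, (∀ l ≥ (1:ℝ), g l ≤ C * (l ^ 2)⁻¹) →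
      ∃ zl : ℝ, Tendsto z atTop (nhds zl)) := by
  have hm2 : (0:ℝ) < m ^ 2 := by positivity
  set f : ℝ → ℝ := fun s => (s ^ 2)⁻¹ * a s with hf
  have hf_cont : ContinuousOn f (Set.Ici 1) := by
    apply ContinuousOn.mul _ ha_cont
    apply ContinuousOn.inv₀
    · exact (continuousOn_id.pow 2)
    · intro s hs
      have : (1:ℝ) ≤ s := hs
      positivity
  -- interval integrability of continuous functions on [1, b]
  have hint : ∀ (h : ℝ → ℝ), ContinuousOn h (Set.Ici 1) → ∀ b ≥ (1:ℝ),
      IntervalIntegrable h MeasureTheory.volume 1 b := by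
    intro h hh b hb
    apply (hh.mono ?_).intervalIntegrable
    rw [Set.uIcc_of_le hb]
    exact Set.Icc_subset_Ici_self
  set A : ℝ → ℝ := fun l => ∫ s in (1:ℝ)..l, f s with hA
  -- derivative of A at interior points
  have hAderiv : ∀ l ∈ Set.Ioi (1:ℝ), HasDerivAt A (f l) l := by
    intro l hl
    have hl1 : (1:ℝ) ≤ l := le_of_lt hl
    have hsub : Set.Ioi (1:ℝ) ⊆ Set.Ici 1 := Set.Ioi_subset_Ici_self
    exact intervalIntegral.integral_hasDerivAt_right (hint f hf_cont l hl1)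
      ((hf_cont.mono hsub).stronglyMeasurableAtFilter isOpen_Ioi l hl)
      ((hf_cont.mono hsub).continuousAt (Ioi_mem_nhds hl))
  -- continuity of A on Ici 1
  have hA1 : A 1 = 0 := intervalIntegral.integral_same
  have hA_cont : ContinuousOn A (Set.Ici 1) := by
    intro l hl
    rcases eq_or_lt_of_le (Set.mem_Ici.mp hl) with h | h
    · subst h
      have : HasDerivWithinAt A (f 1) (Set.Ici 1) 1 :=
        intervalIntegral.integral_hasDerivWithinAt_right (t := Set.Ioi 1)
          (hint f hf_cont 1 le_rfl)
          ((hf_cont.mono Set.Ioi_subset_Ici_self).stronglyMeasurableAtFilter_nhdsWithin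
            measurableSet_Ioi 1)
          ((hf_cont 1 Set.self_mem_Ici).mono Set.Ioi_subset_Ici_self)
      exact this.continuousWithinAt
    · exact ((hAderiv l h).continuousAt).continuousWithinAt
  -- value of ∫ s⁻²
  have hQ : ∀ l ≥ (1:ℝ), (∫ s in (1:ℝ)..l, (s ^ 2)⁻¹) = 1 - l⁻¹ := by
    intro l hl
    have h0 : (0:ℝ) ∉ Set.uIcc (1:ℝ) l := by
      rw [Set.uIcc_of_le hl]
      intro h0
      exact absurd h0.1 (by norm_num)
    have := integral_zpow (a := (1:ℝ)) (b := l) (n := -2) (Or.inr ⟨by norm_num, h0⟩)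
    have heq : ∀ s : ℝ, s ≠ 0 → (s:ℝ) ^ (-2 : ℤ) = (s ^ 2)⁻¹ := by
      intro s hs; rw [zpow_neg, zpow_two]; ring_nf
    calc (∫ s in (1:ℝ)..l, (s ^ 2)⁻¹) = ∫ s in (1:ℝ)..l, (s:ℝ) ^ (-2:ℤ) := by
          apply intervalIntegral.integral_congr
          intro s hs
          rw [Set.uIcc_of_le hl] at hs
          have : s ≠ 0 := by have := hs.1; intro h; simp [h] at this; linarith
          exact (heq s this).symm
      _ = 1 - l⁻¹ := by
          rw [this]
          norm_num
          ring
  -- bound |A l| ≤ δ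
  have hsq_cont : ContinuousOn (fun s : ℝ => (s ^ 2)⁻¹) (Set.Ici 1) := by
    apply ContinuousOn.inv₀ (continuousOn_id.pow 2)
    intro s hs
    have : (1:ℝ) ≤ s := hs
    show s ^ 2 ≠ 0
    positivity
  have hAbound : ∀ l ≥ (1:ℝ), |A l| ≤ δ := by
    intro l hl
    have h1 : |A l| ≤ ∫ s in (1:ℝ)..l, |f s| :=
      intervalIntegral.abs_integral_le_integral_abs hl
    have h2 : (∫ s in (1:ℝ)..l, |f s|) ≤ ∫ s in (1:ℝ)..l, δ * (s ^ 2)⁻¹ := by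
      apply intervalIntegral.integral_mono_on hl (hint _ hf_cont.abs l hl)
        (hint _ (continuousOn_const.mul hsq_cont) l hl)
      intro s hs
      have hs1 : (1:ℝ) ≤ s := hs.1
      have hs0 : (0:ℝ) < s ^ 2 := by positivity
      have : |f s| = (s ^ 2)⁻¹ * |a s| := by
        rw [hf, abs_mul, abs_of_pos (inv_pos.mpr hs0)]
      rw [this]
      have := ha s hs1
      have hinv : (0:ℝ) ≤ (s ^ 2)⁻¹ := le_of_lt (inv_pos.mpr hs0)
      show (s ^ 2)⁻¹ * |a s| ≤ δ * (s ^ 2)⁻¹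
      nlinarith
    have h3 : (∫ s in (1:ℝ)..l, δ * (s ^ 2)⁻¹) = δ * (1 - l⁻¹) := by
      rw [intervalIntegral.integral_const_mul, hQ l hl]
    have hl0 : (0:ℝ) < l := lt_of_lt_of_le one_pos hl
    have hinvl : l⁻¹ ≤ 1 := by
      rw [inv_le_one_iff₀]; right; exact hl
    have hinvl0 : 0 < l⁻¹ := inv_pos.mpr hl0
    nlinarith
  have hexpA_lb : ∀ l ≥ (1:ℝ), Real.exp (-δ) ≤ Real.exp (A l) := by
    intro l hl
    apply Real.exp_le_exp.mpr
    have := abs_le.mp (hAbound l hl)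
    linarith [this.1]
  have hexpA_ub : ∀ l ≥ (1:ℝ), Real.exp (A l) ≤ Real.exp δ := by
    intro l hl
    apply Real.exp_le_exp.mpr
    exact (abs_le.mp (hAbound l hl)).2
  -- the integrating-factor function u
  set u : ℝ → ℝ := fun l => Real.exp (A l) * z l with hu
  have hz_cont : ContinuousOn z (Set.Ici 1) := fun l hl =>
    ((hz l hl).continuousAt).continuousWithinAt
  have hu_cont : ContinuousOn u (Set.Ici 1) :=
    (Real.continuous_exp.comp_continuousOn hA_cont).mul hz_cont
  have hu_deriv : ∀ l ∈ Set.Ioi (1:ℝ), HasDerivAt u (Real.exp (A l) * g l) l := by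
    intro l hl
    have h1 := ((hAderiv l hl).exp).mul (hz l (le_of_lt hl))
    refine h1.congr_deriv ?_
    simp only [hf]
    ring
  have hu1 : u 1 = 0 := by simp [hu, hz1]
  -- positivity of g
  have hg_pos : ∀ l ≥ (1:ℝ), 0 < g l := by
    intro l hl
    have hl0 : (0:ℝ) < l := lt_of_lt_of_le one_pos hl
    have : (0:ℝ) < (1 - δ) / (2 * m ^ 2 * l ^ 2) := by
      apply div_pos (by linarith) (by positivity)
    linarith [hg l hl]
  -- numeric inequality
  have hnum : (1:ℝ)/2 ≤ Real.exp (-(2*δ)) * (1 - δ) := by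
    have h3 : Real.exp (1/5 : ℝ) ≤ 5/4 := by
      have h4 := Real.add_one_le_exp (-(1/5):ℝ)
      rw [Real.exp_neg] at h4
      have h5 : (0:ℝ) < Real.exp (1/5) := Real.exp_pos _
      have h6 : Real.exp (1/5 : ℝ) * (Real.exp (1/5 : ℝ))⁻¹ = 1 := mul_inv_cancel₀ (ne_of_gt h5)
      nlinarith
    have h15 : Real.exp (2*δ) ≤ 25/16 := by
      have h1 : Real.exp (2*δ) ≤ Real.exp (2/5 : ℝ) := Real.exp_le_exp.mpr (by linarith)
      have h2 : Real.exp (2/5 : ℝ) = Real.exp (1/5 : ℝ) * Real.exp (1/5 : ℝ) := by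
        rw [← Real.exp_add]; norm_num
      nlinarith [Real.exp_pos (1/5 : ℝ)]
    rw [Real.exp_neg, inv_mul_eq_div, le_div_iff₀ (Real.exp_pos _)]
    linarith
  -- lower bound function
  set c : ℝ := Real.exp (-δ) * (1 - δ) / (2 * m ^ 2) with hc
  have hc0 : 0 ≤ c := by
    apply div_nonneg _ (by positivity)
    have := Real.exp_pos (-δ)
    nlinarith
  have hlow : ∀ l ≥ (1:ℝ), c * (1 - l⁻¹) ≤ u l := by
    have hF_cont : ContinuousOn (fun l => u l - c * (1 - l⁻¹)) (Set.Ici 1) := by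
      apply hu_cont.sub
      apply ContinuousOn.mul continuousOn_const
      apply ContinuousOn.sub continuousOn_const
      apply ContinuousOn.inv₀ continuousOn_id
      intro s hs
      exact ne_of_gt (lt_of_lt_of_le one_pos hs)
    have hmono := monoAux hF_cont ?_
    · intro l hl
      have h := hmono Set.self_mem_Ici hl hl
      simp only at h
      have h1 : (1:ℝ)⁻¹ = 1 := inv_one
      rw [hu1] at h
      simp [h1] at h
      linarith
    · intro l hl
      have hl1 : (1:ℝ) ≤ l := le_of_lt hl
      have hl0 : (0:ℝ) < l := lt_of_lt_of_le one_pos hl1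
      refine ⟨Real.exp (A l) * g l - c * (l ^ 2)⁻¹, ?_, ?_⟩
      · have hge : Real.exp (-δ) * ((1 - δ) / (2 * m ^ 2 * l ^ 2)) ≤ Real.exp (A l) * g l := by
          refine mul_le_mul (hexpA_lb l hl1) (hg l hl1) ?_ (le_of_lt (Real.exp_pos _))
          exact le_of_lt (div_pos (by linarith) (by positivity))
        have heq : Real.exp (-δ) * ((1 - δ) / (2 * m ^ 2 * l ^ 2)) = c * (l ^ 2)⁻¹ := by
          rw [hc]; field_simp
        linarith
      · have hinv : HasDerivAt (fun x : ℝ => c * (1 - x⁻¹)) (c * (l ^ 2)⁻¹) l := by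
          have h := ((hasDerivAt_inv (ne_of_gt hl0)).const_sub (1:ℝ)).const_mul c
          refine h.congr_deriv ?_
          ring
        exact (hu_deriv l hl).sub hinv
  -- z in terms of u
  have hzu : ∀ l, Real.exp (-(A l)) * u l = z l := by
    intro l
    simp only [hu, ← mul_assoc, ← Real.exp_add]
    simp
  -- MAIN LOWER BOUND
  have main : ∀ l ≥ (1:ℝ), z l ≥ (l - 1) / (4 * m ^ 2 * l) := by
    intro l hl
    have hl0 : (0:ℝ) < l := lt_of_lt_of_le one_pos hl
    have hinvl : l⁻¹ ≤ 1 := by rw [inv_le_one_iff₀]; right; exact hl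
    have hu_nonneg : 0 ≤ u l := le_trans (by nlinarith) (hlow l hl)
    have h1 : Real.exp (-δ) * u l ≤ Real.exp (-(A l)) * u l := by
      apply mul_le_mul_of_nonneg_right _ hu_nonneg
      apply Real.exp_le_exp.mpr
      have := abs_le.mp (hAbound l hl)
      linarith [this.2]
    have h2 : Real.exp (-δ) * (c * (1 - l⁻¹)) ≤ Real.exp (-δ) * u l :=
      mul_le_mul_of_nonneg_left (hlow l hl) (le_of_lt (Real.exp_pos _))
    have h3 : Real.exp (-δ) * (c * (1 - l⁻¹)) =
        Real.exp (-(2*δ)) * (1 - δ) / (2 * m ^ 2) * (1 - l⁻¹) := by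
      have he : Real.exp (-δ) * Real.exp (-δ) = Real.exp (-(2*δ)) := by
        rw [← Real.exp_add]; ring_nf
      rw [hc, ← he]
      ring
    have h4 : (1:ℝ)/2 / (2 * m ^ 2) * (1 - l⁻¹) ≤
        Real.exp (-(2*δ)) * (1 - δ) / (2 * m ^ 2) * (1 - l⁻¹) := by
      have hd : (1:ℝ)/2 / (2 * m ^ 2) ≤ Real.exp (-(2*δ)) * (1 - δ) / (2 * m ^ 2) := by
        gcongr
      exact mul_le_mul_of_nonneg_right hd (by linarith)
    have hl' : l ≠ 0 := ne_of_gt hl0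
    have h5 : (l - 1) / (4 * m ^ 2 * l) = (1:ℝ)/2 / (2 * m ^ 2) * (1 - l⁻¹) := by
      rw [div_eq_iff (ne_of_gt (by positivity : (0:ℝ) < 4 * m ^ 2 * l))]
      field_simp
      ring
    rw [ge_iff_le, ← hzu l, h5]
    linarith
  refine ⟨main, ?_, ?_⟩
  · intro l hl
    have h1 := main l (le_of_lt hl)
    have h2 : (0:ℝ) < (l - 1) / (4 * m ^ 2 * l) := by
      apply div_pos (by linarith)
      have : (0:ℝ) < l := lt_trans one_pos hl
      positivity
    linarith
  · intro C hC
    have hC0 : 0 < C := by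
      have h1 := hg_pos 1 le_rfl
      have h2 := hC 1 le_rfl
      norm_num at h2
      linarith
    -- u is monotone and bounded above
    have hu_mono : MonotoneOn u (Set.Ici 1) :=
      monoAux hu_cont (fun l hl => ⟨Real.exp (A l) * g l,
        mul_nonneg (le_of_lt (Real.exp_pos _)) (le_of_lt (hg_pos l (le_of_lt hl))),
        hu_deriv l hl⟩)
    have hub : ∀ l ∈ Set.Ici (1:ℝ), u l ≤ Real.exp δ * C := by
      have hH_cont : ContinuousOn (fun l => Real.exp δ * C * (1 - l⁻¹) - u l) (Set.Ici 1) := by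
        apply ContinuousOn.sub _ hu_cont
        apply ContinuousOn.mul continuousOn_const
        apply ContinuousOn.sub continuousOn_const
        apply ContinuousOn.inv₀ continuousOn_id
        intro s hs
        exact ne_of_gt (lt_of_lt_of_le one_pos hs)
      have hHmono := monoAux hH_cont ?_
      · intro l hl
        have h := hHmono Set.self_mem_Ici hl hl
        norm_num [hu1] at h
        have hl0 : (0:ℝ) < l := lt_of_lt_of_le one_pos hl
        have hinvl : 0 < l⁻¹ := inv_pos.mpr hl0
        have hec : 0 ≤ Real.exp δ * C := by positivity
        nlinarith
      · intro l hl
        have hl1 : (1:ℝ) ≤ l := le_of_lt hl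
        have hl0 : (0:ℝ) < l := lt_of_lt_of_le one_pos hl1
        refine ⟨Real.exp δ * C * (l ^ 2)⁻¹ - Real.exp (A l) * g l, ?_, ?_⟩
        · have e1 : Real.exp (A l) * g l ≤ Real.exp (A l) * (C * (l ^ 2)⁻¹) :=
            mul_le_mul_of_nonneg_left (hC l hl1) (le_of_lt (Real.exp_pos _))
          have e2 : Real.exp (A l) * (C * (l ^ 2)⁻¹) ≤ Real.exp δ * (C * (l ^ 2)⁻¹) :=
            mul_le_mul_of_nonneg_right (hexpA_ub l hl1) (by positivity)
          have e3 : Real.exp δ * (C * (l ^ 2)⁻¹) = Real.exp δ * C * (l ^ 2)⁻¹ := by ring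
          linarith
        · have hinv : HasDerivAt (fun x : ℝ => Real.exp δ * C * (1 - x⁻¹))
              (Real.exp δ * C * (l ^ 2)⁻¹) l := by
            have h := ((hasDerivAt_inv (ne_of_gt hl0)).const_sub (1:ℝ)).const_mul
              (Real.exp δ * C)
            refine h.congr_deriv ?_
            ring
          exact hinv.sub (hu_deriv l hl)
    obtain ⟨Lu, hLu⟩ := tendstoAux hu_mono hub
    -- convergence of A via P := A + δ(1 - l⁻¹)
    set P : ℝ → ℝ := fun l => A l + δ * (1 - l⁻¹) with hP
    have hP_cont : ContinuousOn P (Set.Ici 1) := by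
      apply hA_cont.add
      apply ContinuousOn.mul continuousOn_const
      apply ContinuousOn.sub continuousOn_const
      apply ContinuousOn.inv₀ continuousOn_id
      intro s hs
      exact ne_of_gt (lt_of_lt_of_le one_pos hs)
    have hP_mono : MonotoneOn P (Set.Ici 1) := by
      apply monoAux hP_cont
      intro l hl
      have hl1 : (1:ℝ) ≤ l := le_of_lt hl
      have hl0 : (0:ℝ) < l := lt_of_lt_of_le one_pos hl1
      refine ⟨f l + δ * (l ^ 2)⁻¹, ?_, ?_⟩
      · have h1 := abs_le.mp (ha l hl1)
        have h2 : (0:ℝ) < (l ^ 2)⁻¹ := by positivity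
        have : f l = (l ^ 2)⁻¹ * a l := rfl
        rw [this]
        nlinarith [h1.1]
      · have hinv : HasDerivAt (fun x : ℝ => δ * (1 - x⁻¹)) (δ * (l ^ 2)⁻¹) l := by
          have h := ((hasDerivAt_inv (ne_of_gt hl0)).const_sub (1:ℝ)).const_mul δ
          refine h.congr_deriv ?_
          ring
        exact (hAderiv l hl).add hinv
    have hP_bdd : ∀ l ∈ Set.Ici (1:ℝ), P l ≤ 2 * δ := by
      intro l hl
      have hl0 : (0:ℝ) < l := lt_of_lt_of_le one_pos hl
      have h1 := (abs_le.mp (hAbound l hl)).2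
      have h2 : 0 < l⁻¹ := inv_pos.mpr hl0
      simp only [hP]
      nlinarith
    obtain ⟨LP, hLP⟩ := tendstoAux hP_mono hP_bdd
    have hinv_t : Tendsto (fun l : ℝ => 1 - l⁻¹) atTop (nhds 1) := by
      have h : Tendsto (fun l : ℝ => l⁻¹) atTop (nhds 0) := tendsto_inv_atTop_zero
      have h2 := h.const_sub (1:ℝ)
      simpa using h2
    have hA_t : Tendsto A atTop (nhds (LP - δ)) := by
      have h := hLP.sub (hinv_t.const_mul δ)
      have heq : (fun l => P l - δ * (1 - l⁻¹)) = A := by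
        funext l
        simp only [hP]
        ring
      rw [heq] at h
      simpa [mul_comm] using h
    refine ⟨Real.exp (-(LP - δ)) * Lu, ?_⟩
    have hlim : Tendsto (fun l => Real.exp (-(A l)) * u l) atTop
        (nhds (Real.exp (-(LP - δ)) * Lu)) :=
      ((Real.continuous_exp.tendsto _).comp hA_t.neg).mul hLu
    exact hlim.congr hzu
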